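/- arXiv:1407.7872 — 7 statements merged into one kernel-verified Lean document; each statement's English description precedes it below -/
import Mathlib

section
/- Let X be a real Banach space and let Y be a uniformly convex real Banach space. Suppose that the set of norm-attaining operators is dense (in operator norm) in the space L(X,Y) of bounded linear operators from X to Y. Then for every ε with 0 < ε < 1 there exists η > 0 such that whenever T ∈ L(X,Y) with ‖T‖ = 1 and x₁ ∈ X with ‖x₁‖ = 1 satisfy ‖T x₁‖ > 1 − η, there exist S ∈ L(X,Y) with ‖S‖ = 1 and x₂ ∈ X with ‖x₂‖ = 1 such that ‖S x₂‖ = 1, ‖S − T‖ < ε and ‖T x₁ − S x₂‖ < ε. -/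
/-- If `Y` is uniformly convex and the norm-attaining operators are dense in `L(X,Y)`,
then for every `0 < ε < 1` there is `η > 0` such that whenever `‖T‖ = 1`, `‖x₁‖ = 1` and
`‖T x₁‖ > 1 - η`, there are `S` with `‖S‖ = 1` and `x₂` with `‖x₂‖ = 1` such that
`‖S x₂‖ = 1`, `‖S - T‖ < ε` and `‖T x₁ - S x₂‖ < ε`. -/
theorem bpb_of_denseNormAttaining_uniformConvex
    {X : Type*} [NormedAddCommGroup X] [NormedSpace ℝ X] [CompleteSpace X]
    {Y : Type*} [NormedAddCommGroup Y] [NormedSpace ℝ Y] [CompleteSpace Y]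
    [UniformConvexSpace Y]
    (hdense : ∀ (T : X →L[ℝ] Y) (δ : ℝ), 0 < δ →
      ∃ S : X →L[ℝ] Y, ‖T - S‖ < δ ∧ ∃ x : X, ‖x‖ = 1 ∧ ‖S x‖ = ‖S‖)
    {ε : ℝ} (hε0 : 0 < ε) (hε1 : ε < 1) :
    ∃ η > (0 : ℝ), ∀ (T : X →L[ℝ] Y) (x₁ : X),
      ‖T‖ = 1 → ‖x₁‖ = 1 → ‖T x₁‖ > 1 - η →
      ∃ (S : X →L[ℝ] Y) (x₂ : X),
        ‖S‖ = 1 ∧ ‖x₂‖ = 1 ∧ ‖S x₂‖ = 1 ∧ ‖S - T‖ < ε ∧ ‖T x₁ - S x₂‖ < ε := by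
  obtain ⟨δ, hδ0, hδ⟩ := exists_forall_closed_ball_dist_add_le_two_sub Y (half_pos hε0)
  set δ' : ℝ := min δ 1 with hδ'def
  have hδ'0 : 0 < δ' := lt_min hδ0 one_pos
  have hδ'1 : δ' ≤ 1 := min_le_right _ _
  have hδ'δ : δ' ≤ δ := min_le_left _ _
  set l : ℝ := ε / 8 with hldef
  have hl0 : 0 < l := by positivity
  set η : ℝ := ε * δ' / 100 with hηdef
  have hη0 : 0 < η := by positivity
  have hηle : η ≤ ε / 100 := by
    rw [hηdef]; nlinarith
  have hη1 : η < 1 := by linarith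
  have hηl : 2 * η < l := by rw [hldef]; linarith
  have hl1 : l < 1 := by rw [hldef]; linarith
  refine ⟨η, hη0, ?_⟩
  intro T x₁ hT hx₁ hTx₁
  have hTx₁pos : 0 < ‖T x₁‖ := by linarith
  have hTx₁ne : T x₁ ≠ 0 := by
    intro h; rw [h, norm_zero] at hTx₁pos; exact lt_irrefl _ hTx₁pos
  have hTx₁le : ‖T x₁‖ ≤ 1 := by
    have := T.le_opNorm x₁; rw [hT, hx₁, one_mul] at this; exact this
  set y : Y := ‖T x₁‖⁻¹ • T x₁ with hydef
  have hy1 : ‖y‖ = 1 := by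
    rw [hydef, norm_smul, norm_inv, Real.norm_eq_abs, abs_of_pos hTx₁pos,
      inv_mul_cancel₀ (ne_of_gt hTx₁pos)]
  have hx₁ne : x₁ ≠ 0 := by
    intro h; rw [h, norm_zero] at hx₁; exact zero_ne_one hx₁
  obtain ⟨f, hf1, hfx₁⟩ := exists_dual_vector ℝ x₁ (norm_ne_zero_iff.mpr hx₁ne)
  have hfx₁' : f x₁ = 1 := by rw [hx₁] at hfx₁; simpa using hfx₁
  set U : X →L[ℝ] Y := T + l • f.smulRight y with hUdef
  have hUapp : ∀ x, U x = T x + (l * f x) • y := by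
    intro x
    simp [hUdef, smul_smul]
  have hUT : ‖U - T‖ = l := by
    have h1 : U - T = l • f.smulRight y := by rw [hUdef]; abel
    rw [h1, norm_smul l (f.smulRight y), ContinuousLinearMap.norm_smulRight_apply, hf1, hy1,
      Real.norm_eq_abs, abs_of_pos hl0]
    ring
  have hTy : (‖T x₁‖ : ℝ) • y = T x₁ := by
    rw [hydef, smul_smul, mul_inv_cancel₀ (ne_of_gt hTx₁pos), one_smul]
  have hUx₁ : ‖U x₁‖ = ‖T x₁‖ + l := by
    have h1 : U x₁ = (‖T x₁‖ + l) • y := by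
      rw [hUapp, hfx₁', mul_one, add_smul, hTy]
    rw [h1, norm_smul, hy1, mul_one, Real.norm_of_nonneg (by linarith)]
  obtain ⟨S₀, hUS₀, x₂', hx₂'1, hS₀x₂'⟩ := hdense U η hη0
  have hUnorm_ge : ‖T x₁‖ + l ≤ ‖U‖ := by
    have := U.le_opNorm x₁; rw [hx₁, mul_one] at this; linarith [hUx₁ ▸ this]
  have hUnorm_le : ‖U‖ ≤ 1 + l := by
    have h1 : T + (U - T) = U := by abel
    have h2 : ‖T + (U - T)‖ ≤ ‖T‖ + ‖U - T‖ := norm_add_le _ _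
    rw [h1, hT, hUT] at h2; exact h2
  have hS₀lb : 1 + l - 2 * η < ‖S₀‖ := by
    have h1 : ‖U‖ - ‖S₀‖ ≤ ‖U - S₀‖ := norm_sub_norm_le _ _
    linarith
  have hS₀ub : ‖S₀‖ ≤ 1 + l + η := by
    have h1 : ‖S₀‖ - ‖U‖ ≤ ‖S₀ - U‖ := norm_sub_norm_le _ _
    rw [norm_sub_rev] at h1
    linarith
  have hS₀pos : 0 < ‖S₀‖ := by linarith
  -- sign-normalize x₂
  set s : ℝ := if 0 ≤ f x₂' then 1 else -1 with hsdef
  have hs : |s| = 1 := by rw [hsdef]; split_ifs <;> simp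
  set x₂ : X := s • x₂' with hx₂def
  have hx₂1 : ‖x₂‖ = 1 := by
    rw [hx₂def, norm_smul, Real.norm_eq_abs, hs, one_mul, hx₂'1]
  have hS₀x₂ : ‖S₀ x₂‖ = ‖S₀‖ := by
    rw [hx₂def, map_smul, norm_smul, Real.norm_eq_abs, hs, one_mul, hS₀x₂']
  have hfx₂0 : 0 ≤ f x₂ := by
    rw [hx₂def, map_smul, hsdef]
    split_ifs with h
    · simpa using h
    · simp only [smul_eq_mul, neg_one_mul]; linarith [(not_le.mp h).le]
  have hfx₂le : f x₂ ≤ 1 := by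
    have h1 := f.le_opNorm x₂
    rw [hf1, hx₂1, one_mul, Real.norm_eq_abs] at h1
    exact le_trans (le_abs_self _) h1
  have hTx₂le : ‖T x₂‖ ≤ 1 := by
    have := T.le_opNorm x₂; rw [hT, hx₂1, one_mul] at this; exact this
  have hUx₂gt : 1 + l - 3 * η < ‖U x₂‖ := by
    have h1 : ‖U x₂ - S₀ x₂‖ ≤ ‖U - S₀‖ * ‖x₂‖ := by
      have := (U - S₀).le_opNorm x₂
      simpa using this
    rw [hx₂1, mul_one] at h1
    have h2 : ‖S₀ x₂‖ - ‖U x₂‖ ≤ ‖S₀ x₂ - U x₂‖ := norm_sub_norm_le _ _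
    rw [norm_sub_rev] at h2
    linarith [hS₀x₂ ▸ h2]
  have hUx₂le : ‖U x₂‖ ≤ 1 + l * f x₂ := by
    rw [hUapp]
    have h1 : ‖T x₂ + (l * f x₂) • y‖ ≤ ‖T x₂‖ + ‖(l * f x₂) • y‖ := norm_add_le _ _
    have h2 : ‖(l * f x₂) • y‖ = l * f x₂ := by
      rw [norm_smul, hy1, mul_one, Real.norm_of_nonneg (by positivity)]
    linarith
  have hlf : l - 3 * η < l * f x₂ := by linarith
  have h6 : 1 + l - 6 * η ≤ ‖T x₂ + l • y‖ := by
    have heq : T x₂ + l • y = U x₂ + (l - l * f x₂) • y := by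
      rw [hUapp]; module
    have h1 : ‖U x₂‖ - ‖(l - l * f x₂) • y‖ ≤ ‖U x₂ + (l - l * f x₂) • y‖ := by
      have h := norm_sub_norm_le (U x₂) (-((l - l * f x₂) • y))
      simpa [sub_neg_eq_add] using h
    have h2 : ‖(l - l * f x₂) • y‖ ≤ 3 * η := by
      rw [norm_smul, hy1, mul_one,
        Real.norm_of_nonneg (sub_nonneg.mpr (mul_le_of_le_one_right hl0.le hfx₂le))]
      linarith
    rw [heq]; linarith
  have h7 : 2 * l - 6 * η ≤ l * ‖T x₂ + y‖ := by
    have heq : (T x₂ + l • y) - (1 - l) • T x₂ = l • (T x₂ + y) := by module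
    have h1 : ‖T x₂ + l • y‖ - ‖(1 - l) • T x₂‖ ≤ ‖(T x₂ + l • y) - (1 - l) • T x₂‖ :=
      norm_sub_norm_le _ _
    rw [heq, norm_smul l (T x₂ + y), Real.norm_of_nonneg (le_of_lt hl0)] at h1
    have h2 : ‖(1 - l) • T x₂‖ ≤ 1 - l := by
      rw [norm_smul (1 - l) (T x₂), Real.norm_of_nonneg (by linarith)]
      exact mul_le_of_le_one_right (by linarith) hTx₂le
    linarith
  have h8 : ‖T x₂ - y‖ < ε / 2 := by
    by_contra hc
    push_neg at hc
    have h1 : ‖T x₂ + y‖ ≤ 2 - δ := hδ hTx₂le (le_of_eq hy1) hc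
    have h2 : l * ‖T x₂ + y‖ ≤ l * (2 - δ) := mul_le_mul_of_nonneg_left h1 hl0.le
    have h2' : l * (2 - δ) = 2 * l - l * δ := by ring
    have h3 : l * δ ≤ 6 * η := by linarith
    have h4 : 6 * η = (48 / 100) * (l * δ') := by rw [hηdef, hldef]; ring
    have h5 : l * δ' ≤ l * δ := mul_le_mul_of_nonneg_left hδ'δ hl0.le
    have h6 : 0 < l * δ' := mul_pos hl0 hδ'0
    linarith
  -- define S
  set S : X →L[ℝ] Y := ‖S₀‖⁻¹ • S₀ with hSdef
  have hS₀ne : ‖S₀‖ ≠ 0 := ne_of_gt hS₀pos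
  have hSnorm : ‖S‖ = 1 := by
    rw [hSdef, norm_smul ‖S₀‖⁻¹ S₀, norm_inv, norm_norm, inv_mul_cancel₀ hS₀ne]
  have hSx₂ : ‖S x₂‖ = 1 := by
    rw [hSdef, ContinuousLinearMap.smul_apply, norm_smul, norm_inv, norm_norm,
      hS₀x₂, inv_mul_cancel₀ hS₀ne]
  have hSS₀ : ‖S - S₀‖ ≤ l + η := by
    have heq : S - S₀ = (‖S₀‖⁻¹ - 1) • S₀ := by rw [hSdef]; module
    rw [heq, norm_smul (‖S₀‖⁻¹ - 1) S₀, Real.norm_eq_abs]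
    have key : (‖S₀‖⁻¹ - 1) * ‖S₀‖ = 1 - ‖S₀‖ := by
      rw [sub_mul, inv_mul_cancel₀ hS₀ne, one_mul]
    have h1 : |‖S₀‖⁻¹ - 1| * ‖S₀‖ = |1 - ‖S₀‖| := by
      calc |‖S₀‖⁻¹ - 1| * ‖S₀‖ = |‖S₀‖⁻¹ - 1| * |‖S₀‖| := by rw [abs_of_pos hS₀pos]
      _ = |(‖S₀‖⁻¹ - 1) * ‖S₀‖| := (abs_mul _ _).symm
      _ = |1 - ‖S₀‖| := by rw [key]
    rw [h1]
    exact abs_le.mpr ⟨by linarith, by linarith⟩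
  have hST : ‖S - T‖ < ε := by
    have heq : S - T = (S - S₀) + (S₀ - U) + (U - T) := by abel
    have h1 : ‖S - T‖ ≤ ‖S - S₀‖ + ‖S₀ - U‖ + ‖U - T‖ := by
      rw [heq]; exact norm_add₃_le
    rw [norm_sub_rev S₀ U, hUT] at h1
    have : l = ε / 8 := hldef
    linarith
  refine ⟨S, x₂, hSnorm, hx₂1, hSx₂, hST, ?_⟩
  -- ‖T x₁ - y‖ = 1 - ‖T x₁‖
  have hay : ‖T x₁ - y‖ = 1 - ‖T x₁‖ := by
    have heq : T x₁ - y = (1 - ‖T x₁‖⁻¹) • T x₁ := by rw [hydef]; module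
    rw [heq, norm_smul (1 - ‖T x₁‖⁻¹) (T x₁), Real.norm_eq_abs]
    have hinv : 1 ≤ ‖T x₁‖⁻¹ := (one_le_inv₀ hTx₁pos).2 hTx₁le
    rw [abs_of_nonpos (by linarith)]
    field_simp
    ring
  have hTSx₂ : ‖T x₂ - S x₂‖ ≤ ‖S - T‖ := by
    have h1 := (S - T).le_opNorm x₂
    rw [hx₂1, mul_one] at h1
    calc ‖T x₂ - S x₂‖ = ‖(S - T) x₂‖ := by rw [norm_sub_rev]; simp
    _ ≤ ‖S - T‖ := h1
  have hSTle : ‖S - T‖ ≤ 2 * l + 2 * η := by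
    have heq : S - T = (S - S₀) + (S₀ - U) + (U - T) := by abel
    have h1 : ‖S - T‖ ≤ ‖S - S₀‖ + ‖S₀ - U‖ + ‖U - T‖ := by
      rw [heq]; exact norm_add₃_le
    rw [norm_sub_rev S₀ U, hUT] at h1
    linarith
  have heq2 : T x₁ - S x₂ = (T x₁ - y) + (y - T x₂) + (T x₂ - S x₂) := by abel
  have h9 : ‖T x₁ - S x₂‖ ≤ ‖T x₁ - y‖ + ‖y - T x₂‖ + ‖T x₂ - S x₂‖ := by
    rw [heq2]; exact norm_add₃_le
  rw [norm_sub_rev y (T x₂)] at h9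
  rw [hay] at h9
  have : l = ε / 8 := hldef
  linarith
end

section
/- Let X be a real Banach space and let Y be a uniformly convex real Banach space with modulus of convexity δ_Y, and suppose the set of norm-attaining operators is dense (in operator norm) in L(X,Y). Let 0 < ε < 1, let 0 < ε₁ < ε, and let ε₂ > 0 satisfy (1 − ε₂²)³ − 2ε₂ − ε₂³ > 1 − δ_Y(ε₁) and ε₂² + 2ε₂ + ε₁ < ε. Then whenever T ∈ L(X,Y) with ‖T‖ = 1 and x₁ ∈ X with ‖x₁‖ = 1 satisfy ‖T x₁‖ > 1 − ε₂², there exist S ∈ L(X,Y) with ‖S‖ = 1 and x₂ ∈ X with ‖x₂‖ = 1 such that ‖S x₂‖ = 1, ‖S − T‖ < ε and ‖T x₁ − S x₂‖ < ε. -/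
/-- The modulus of convexity of a real normed space `Y`:
`δ_Y(ε) = inf {1 - ‖(x+y)/2‖ : ‖x‖ ≤ 1, ‖y‖ ≤ 1, ‖x - y‖ ≥ ε}`. -/
noncomputable def modulusOfConvexity (Y : Type*) [NormedAddCommGroup Y] (ε : ℝ) : ℝ :=
  sInf {d : ℝ | ∃ x y : Y, ‖x‖ ≤ 1 ∧ ‖y‖ ≤ 1 ∧ ε ≤ ‖x - y‖ ∧ d = 1 - ‖x + y‖ / 2}


private lemma bpb_aux1 {ε ε₁ ε₂ m : ℝ} (hε1 : ε < 1) (hε₁0 : 0 < ε₁)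
    (hε₂0 : 0 < ε₂) (hε₂half : ε₂ < 1/2) (hsum : ε₂ ^ 2 + 2 * ε₂ + ε₁ < ε)
    (hm : 1 - ε₂ ^ 2 < m) (hm1 : m ≤ 1) :
    1 + ε₂ < (m + (ε - ε₁ - ε₂^4/2)) * (m + ε₂ - ε₂^4/2) := by
  nlinarith [sq_nonneg ε₂, sq_nonneg (m - 1), mul_pos hε₂0 hε₂0,
    mul_pos (mul_pos hε₂0 hε₂0) hε₂0, sq_nonneg (ε₂*ε₂), sq_nonneg (m - 1 + ε₂)]

private lemma bpb_aux2 {ε₂ t s : ℝ} (hε₂0 : 0 < ε₂) (hε₂half : ε₂ < 1/2)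
    (hs2 : 1 - ε₂ - ε₂^3 ≤ s) (htup : t ≤ 1 + ε₂ + ε₂^4/2) (ht0 : 0 < t) :
    (1 - (ε₂ + ε₂^2 + ε₂^3 + ε₂^4 + ε₂^4/2)) * t ≤ (1 + ε₂) * s := by
  have hp2 : 0 < ε₂^2 := by positivity
  have hp3 : 0 < ε₂^3 := by positivity
  have hp4 : 0 < ε₂^4 := by positivity
  have hc2 : ε₂^2 < ε₂/2 := by nlinarith
  have hc3 : ε₂^3 < ε₂/4 := by nlinarith
  have hc4 : ε₂^4 < ε₂/8 := by nlinarith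
  have hD : (0:ℝ) ≤ 1 - (ε₂ + ε₂^2 + ε₂^3 + ε₂^4 + ε₂^4/2) := by linarith
  nlinarith [mul_nonneg hD (by linarith : (0:ℝ) ≤ 1 + ε₂ + ε₂^4/2 - t),
    mul_nonneg (by linarith : (0:ℝ) ≤ 1 + ε₂) (by linarith : (0:ℝ) ≤ s - (1 - ε₂ - ε₂^3))]

set_option maxHeartbeats 1000000 in
/-- Quantitative version: if the norm-attaining operators are dense in `L(X,Y)` with `Y`
uniformly convex with modulus of convexity `δ_Y`, `0 < ε₁ < ε < 1`, `ε₂ > 0` satisfies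
`(1 - ε₂²)³ - 2ε₂ - ε₂³ > 1 - δ_Y(ε₁)` and `ε₂² + 2ε₂ + ε₁ < ε`, then whenever `‖T‖ = 1`,
`‖x₁‖ = 1` and `‖T x₁‖ > 1 - ε₂²`, there are `S` with `‖S‖ = 1` and `x₂` with `‖x₂‖ = 1`
such that `‖S x₂‖ = 1`, `‖S - T‖ < ε` and `‖T x₁ - S x₂‖ < ε`. -/
theorem bpb_of_denseNormAttaining_uniformConvex_quantitative
    {X : Type*} [NormedAddCommGroup X] [NormedSpace ℝ X] [CompleteSpace X]
    {Y : Type*} [NormedAddCommGroup Y] [NormedSpace ℝ Y] [CompleteSpace Y]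
    [UniformConvexSpace Y]
    (hdense : ∀ (T : X →L[ℝ] Y) (δ : ℝ), 0 < δ →
      ∃ S : X →L[ℝ] Y, ‖T - S‖ < δ ∧ ∃ x : X, ‖x‖ = 1 ∧ ‖S x‖ = ‖S‖)
    {ε ε₁ ε₂ : ℝ} (hε0 : 0 < ε) (hε1 : ε < 1) (hε₁0 : 0 < ε₁) (hε₁ε : ε₁ < ε)
    (hε₂0 : 0 < ε₂)
    (hδ : (1 - ε₂ ^ 2) ^ 3 - 2 * ε₂ - ε₂ ^ 3 > 1 - modulusOfConvexity Y ε₁)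
    (hsum : ε₂ ^ 2 + 2 * ε₂ + ε₁ < ε)
    (T : X →L[ℝ] Y) (x₁ : X) (hT : ‖T‖ = 1) (hx₁ : ‖x₁‖ = 1)
    (hTx₁ : ‖T x₁‖ > 1 - ε₂ ^ 2) :
    ∃ (S : X →L[ℝ] Y) (x₂ : X),
      ‖S‖ = 1 ∧ ‖x₂‖ = 1 ∧ ‖S x₂‖ = 1 ∧ ‖S - T‖ < ε ∧ ‖T x₁ - S x₂‖ < ε := by
  set δY := modulusOfConvexity Y ε₁ with hδYdef
  clear_value δY
  have hε₂half : ε₂ < 1/2 := by nlinarith [sq_nonneg ε₂]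
  have hδpos : 2*ε₂ + ε₂^3 < δY := by nlinarith [sq_nonneg ε₂, sq_nonneg (1 - ε₂^2), sq_nonneg (2 - ε₂^2), mul_pos hε₂0 hε₂0]
  set η : ℝ := ε₂^4/2 with hηdef
  have hη0 : 0 < η := by positivity
  have hηs : η < ε₂^2/2 := by nlinarith [mul_pos hε₂0 hε₂0]
  clear_value η
  have hp3 : 0 < ε₂^3 := by positivity
  have hp4 : 0 < ε₂^4 := by positivity
  have hcb : ε₂^3 < ε₂/4 := by nlinarith
  have hq4 : ε₂^4 < ε₂/8 := by nlinarith
  have hsqh : ε₂^2 < ε₂/2 := by nlinarith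
  have hm1 : ‖T x₁‖ ≤ 1 := by
    have h := T.le_opNorm x₁
    rw [hT, hx₁] at h; linarith
  have hm0 : (0:ℝ) < ‖T x₁‖ := by nlinarith
  set m := ‖T x₁‖ with hmdef
  clear_value m
  have hx₁ne : x₁ ≠ 0 := fun h => by simp [h] at hx₁
  obtain ⟨f, hf1, hfx⟩ := exists_dual_vector ℝ x₁ (by rw [hx₁]; norm_num)
  have hfx1 : f x₁ = 1 := by rw [hfx, hx₁]; norm_num
  set u : Y := m⁻¹ • T x₁ with hudef
  have hu1 : ‖u‖ = 1 := by
    rw [hudef, norm_smul, norm_inv, Real.norm_of_nonneg hm0.le, ← hmdef,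
      inv_mul_cancel₀ hm0.ne']
  have hTx₁u : T x₁ = m • u := by
    rw [hudef, smul_smul, mul_inv_cancel₀ hm0.ne', one_smul]
  clear_value u
  set R : X →L[ℝ] Y := T + f.smulRight (ε₂ • u) with hRdef
  clear_value R
  have hRT : R - T = f.smulRight (ε₂ • u) := by rw [hRdef]; abel
  have hsrnorm : ‖f.smulRight (ε₂ • u)‖ = ε₂ := by
    rw [ContinuousLinearMap.norm_smulRight_apply, hf1, one_mul, norm_smul,
      Real.norm_of_nonneg hε₂0.le, hu1, mul_one]
  have hRnorm : ‖R‖ ≤ 1 + ε₂ := by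
    calc ‖R‖ = ‖T + f.smulRight (ε₂ • u)‖ := by rw [hRdef]
    _ ≤ ‖T‖ + ‖f.smulRight (ε₂ • u)‖ := norm_add_le _ _
    _ = 1 + ε₂ := by rw [hT, hsrnorm]
  have hRx₁ : R x₁ = (m + ε₂) • u := by
    rw [hRdef, ContinuousLinearMap.add_apply, ContinuousLinearMap.smulRight_apply, hfx1,
      one_smul, hTx₁u, ← add_smul]
  obtain ⟨S₁, hRS₁, x₀, hx₀, hatt₀⟩ := hdense R η hη0
  obtain ⟨σ, hσ1, hattσ, hfσ⟩ : ∃ σ : X, ‖σ‖ = 1 ∧ ‖S₁ σ‖ = ‖S₁‖ ∧ 0 ≤ f σ := by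
    rcases le_or_gt 0 (f x₀) with h | h
    · exact ⟨x₀, hx₀, hatt₀, h⟩
    · exact ⟨-x₀, by simp [hx₀], by simp [hatt₀], by simp; linarith⟩
  set t := ‖S₁‖ with htdef
  clear_value t
  have happly : ∀ z : X, ‖z‖ = 1 → ‖R z - S₁ z‖ ≤ η := by
    intro z hz
    have h1 : ‖(R - S₁) z‖ ≤ ‖R - S₁‖ * ‖z‖ := (R - S₁).le_opNorm z
    rw [hz, mul_one] at h1
    simpa using h1.trans hRS₁.le
  have hS₁x₁ : ‖S₁ x₁‖ ≤ t := by
    have h := S₁.le_opNorm x₁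
    rw [hx₁, mul_one, ← htdef] at h; exact h
  have htlow : m + ε₂ - η ≤ t := by
    have h1 := happly x₁ hx₁
    have h3 : ‖R x₁‖ = m + ε₂ := by
      rw [hRx₁, norm_smul, hu1, mul_one, Real.norm_of_nonneg (by linarith)]
    have h4 := norm_sub_norm_le (R x₁) (S₁ x₁)
    rw [h3] at h4
    linarith
  have htup : t ≤ 1 + ε₂ + η := by
    have h1 : ‖S₁‖ ≤ ‖R‖ + ‖S₁ - R‖ := by
      calc ‖S₁‖ = ‖R + (S₁ - R)‖ := by rw [add_sub_cancel]
      _ ≤ ‖R‖ + ‖S₁ - R‖ := norm_add_le _ _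
    rw [norm_sub_rev] at h1
    linarith [hRS₁]
  have ht1 : 1 ≤ t := by linarith
  have ht0 : (0:ℝ) < t := by linarith
  set s := f σ with hsdef
  clear_value s
  have hs1 : s ≤ 1 := by
    have h1 := f.le_opNorm σ
    rw [hf1, hσ1, one_mul] at h1
    calc s ≤ |s| := le_abs_self s
    _ = ‖f σ‖ := by rw [hsdef, Real.norm_eq_abs]
    _ ≤ 1 := h1
  have ha1 : ‖T σ‖ ≤ 1 := by
    have h := T.le_opNorm σ
    rw [hT, hσ1] at h; linarith
  have hb : ‖s • u‖ = s := by rw [norm_smul, hu1, mul_one, Real.norm_of_nonneg hfσ]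
  have hRσ : R σ = T σ + (ε₂ * s) • u := by
    rw [hRdef, ContinuousLinearMap.add_apply, ContinuousLinearMap.smulRight_apply,
      smul_smul, mul_comm, ← hsdef]
  have hRσn : t - η ≤ ‖R σ‖ := by
    have h1 := happly σ hσ1
    have h2 := norm_sub_norm_le (S₁ σ) (R σ)
    rw [norm_sub_rev] at h2
    rw [hattσ] at h2
    linarith
  have hinvε₂ : (1:ℝ) ≤ ε₂⁻¹ := by
    rw [le_inv_comm₀ one_pos hε₂0]; linarith
  have hab : (t - η - 1 + ε₂)/ε₂ ≤ ‖T σ + s • u‖ := by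
    have hid : T σ + s • u = ε₂⁻¹ • R σ - (ε₂⁻¹ - 1) • T σ := by
      rw [hRσ]
      match_scalars <;> field_simp <;> ring
    rw [hid]
    have h1 := norm_sub_norm_le (ε₂⁻¹ • R σ) ((ε₂⁻¹ - 1) • T σ)
    have h2 : ‖ε₂⁻¹ • R σ‖ = ε₂⁻¹ * ‖R σ‖ := by
      rw [norm_smul, Real.norm_of_nonneg (inv_nonneg.mpr hε₂0.le)]
    have h3 : ‖(ε₂⁻¹ - 1) • T σ‖ ≤ ε₂⁻¹ - 1 := by
      rw [norm_smul, Real.norm_of_nonneg (by linarith)]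
      have h3a := mul_le_mul_of_nonneg_left ha1 (by linarith : (0:ℝ) ≤ ε₂⁻¹ - 1)
      linarith only [h3a]
    have h4 : ε₂⁻¹ * (t - η) ≤ ε₂⁻¹ * ‖R σ‖ :=
      mul_le_mul_of_nonneg_left hRσn (inv_nonneg.mpr hε₂0.le)
    have h5 : (t - η - 1 + ε₂)/ε₂ = ε₂⁻¹ * (t - η) - (ε₂⁻¹ - 1) := by
      field_simp
      ring
    rw [h5]
    linarith
  have habge : 2 - 2*δY < ‖T σ + s • u‖ := by
    refine lt_of_lt_of_le ?_ hab
    rw [lt_div_iff₀ hε₂0]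
    have hmul : ε₂ * (2*ε₂ + ε₂^3) < ε₂ * δY := mul_lt_mul_of_pos_left hδpos hε₂0
    linarith [htlow, hTx₁, hmul]
  have hslow : (t - η - 1 + ε₂)/ε₂ - 1 ≤ s := by
    have h1 : ‖T σ + s • u‖ ≤ ‖T σ‖ + ‖s • u‖ := norm_add_le _ _
    rw [hb] at h1
    linarith
  have hsε : m - 1 + ε₂ - 2*η ≤ s * ε₂ := by
    have h1 : (t - η - 1 + ε₂)/ε₂ ≤ s + 1 := by linarith
    rw [div_le_iff₀ hε₂0] at h1
    ring_nf at h1 ⊢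
    linarith [htlow]
  have hs2 : 1 - ε₂ - ε₂^3 ≤ s := by
    by_contra hcon
    push_neg at hcon
    have h1 : s * ε₂ < (1 - ε₂ - ε₂^3) * ε₂ := mul_lt_mul_of_pos_right hcon hε₂0
    ring_nf at h1
    ring_nf at hsε
    linarith [hTx₁]
  have hs0 : 0 < s := by linarith
  have habdist : ‖T σ - s • u‖ < ε₁ := by
    by_contra hcon
    push_neg at hcon
    have hbdd : BddBelow {d : ℝ | ∃ x y : Y, ‖x‖ ≤ 1 ∧ ‖y‖ ≤ 1 ∧ ε₁ ≤ ‖x - y‖ ∧ d = 1 - ‖x + y‖ / 2} := by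
      refine ⟨0, ?_⟩
      rintro d ⟨x, y, hx, hy, -, rfl⟩
      have := norm_add_le x y
      linarith
    have hmem : 1 - ‖T σ + s • u‖/2 ∈ {d : ℝ | ∃ x y : Y, ‖x‖ ≤ 1 ∧ ‖y‖ ≤ 1 ∧ ε₁ ≤ ‖x - y‖ ∧ d = 1 - ‖x + y‖ / 2} :=
      ⟨T σ, s • u, ha1, by rw [hb]; exact hs1, hcon, rfl⟩
    have hle : δY ≤ 1 - ‖T σ + s • u‖/2 := by
      rw [hδYdef]
      exact csInf_le hbdd hmem
    linarith
  have hw : ‖S₁ σ - R σ‖ ≤ η := by rw [norm_sub_rev]; exact happly σ hσ1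
  set q := (1+ε₂)*s/t with hqdef
  clear_value q
  have hqup : q - m < ε - ε₁ - η := by
    have h1 : q ≤ (1+ε₂)/(m+ε₂-η) := by
      rw [hqdef]
      have hnum : (1+ε₂)*s ≤ 1+ε₂ := by
        have := mul_le_mul_of_nonneg_left hs1 (by linarith : (0:ℝ) ≤ 1+ε₂)
        linarith
      apply div_le_div₀ (by linarith) hnum (by linarith) htlow
    have h2 : (1+ε₂)/(m+ε₂-η) < m + (ε - ε₁ - η) := by
      rw [div_lt_iff₀ (by linarith)]
      have := bpb_aux1 hε1 hε₁0 hε₂0 hε₂half hsum hTx₁ hm1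
      rw [← hηdef] at this
      linarith
    linarith
  have hqlow : m - q < ε - ε₁ - η := by
    have hD : (0:ℝ) < ε₂ + ε₂^2 + ε₂^3 + ε₂^4 + η := by positivity
    have h2 : (1 - (ε₂ + ε₂^2 + ε₂^3 + ε₂^4 + η)) * t ≤ (1+ε₂)*s := by
      have h2' := bpb_aux2 hε₂0 hε₂half hs2 (by rw [← hηdef]; exact htup) ht0
      rw [← hηdef] at h2'
      exact h2'
    have h3 : 1 - (ε₂ + ε₂^2 + ε₂^3 + ε₂^4 + η) ≤ q := by
      rw [hqdef, le_div_iff₀ ht0]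
      exact h2
    linarith [hm1, hsum, hcb, hq4, hηs]
  have hqabs : |m - q| < ε - ε₁ - η := by
    rw [abs_lt]
    constructor <;> linarith
  have hSx : ‖(t⁻¹ • S₁) σ‖ = 1 := by
    rw [ContinuousLinearMap.smul_apply, norm_smul, norm_inv,
      Real.norm_of_nonneg ht0.le, hattσ, inv_mul_cancel₀ ht0.ne']
  refine ⟨t⁻¹ • S₁, σ, ?_, hσ1, hSx, ?_, ?_⟩
  · refine le_antisymm ?_ ?_
    · have h1 := ContinuousLinearMap.opNorm_smul_le t⁻¹ S₁
      rw [← htdef, norm_inv, Real.norm_of_nonneg ht0.le, inv_mul_cancel₀ ht0.ne'] at h1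
      exact h1
    · have h1 := (t⁻¹ • S₁).le_opNorm σ
      rw [hSx, hσ1, mul_one] at h1
      exact h1
  · -- ‖t⁻¹ • S₁ - T‖ < ε
    have h1 : ‖t⁻¹ • S₁ - S₁‖ ≤ t - 1 := by
      have hh : t⁻¹ • S₁ - S₁ = (t⁻¹ - 1) • S₁ := by rw [sub_smul, one_smul]
      have hns := ContinuousLinearMap.opNorm_smul_le (t⁻¹ - 1) S₁
      rw [← htdef, Real.norm_eq_abs,
        abs_of_nonpos (by rw [sub_nonpos, inv_le_one_iff₀]; right; exact ht1)] at hns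
      rw [hh]
      calc ‖(t⁻¹ - 1) • S₁‖ ≤ -(t⁻¹ - 1) * t := hns
      _ = t - 1 := by field_simp [ht0.ne']; ring
    have h2 : ‖t⁻¹ • S₁ - T‖ ≤ ‖t⁻¹ • S₁ - S₁‖ + (‖S₁ - R‖ + ‖R - T‖) := by
      calc ‖t⁻¹ • S₁ - T‖ = ‖(t⁻¹ • S₁ - S₁) + ((S₁ - R) + (R - T))‖ := by
            congr 1; abel
      _ ≤ ‖t⁻¹ • S₁ - S₁‖ + ‖(S₁ - R) + (R - T)‖ := norm_add_le _ _
      _ ≤ ‖t⁻¹ • S₁ - S₁‖ + (‖S₁ - R‖ + ‖R - T‖) := by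
            linarith [norm_add_le (S₁ - R) (R - T)]
    rw [hRT, hsrnorm, norm_sub_rev S₁ R] at h2
    linarith [htup, hRS₁, hε₁0, hηs, h1]
  · -- final distance
    have hdecomp : T x₁ - (t⁻¹ • S₁) σ =
        (m - q) • u - t⁻¹ • ((T σ - s • u) + (S₁ σ - R σ)) := by
      have happ : (t⁻¹ • S₁) σ = t⁻¹ • S₁ σ := rfl
      rw [happ, hTx₁u, hRσ, hqdef]
      match_scalars <;> field_simp <;> ring
    rw [hdecomp]
    have hv : ‖(T σ - s • u) + (S₁ σ - R σ)‖ ≤ ε₁ + η := by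
      have := norm_add_le (T σ - s • u) (S₁ σ - R σ)
      linarith
    have hn1 : ‖(m - q) • u‖ = |m - q| := by
      rw [norm_smul, hu1, mul_one, Real.norm_eq_abs]
    have hn2 : ‖t⁻¹ • ((T σ - s • u) + (S₁ σ - R σ))‖ ≤ ε₁ + η := by
      rw [norm_smul, Real.norm_of_nonneg (inv_nonneg.mpr ht0.le)]
      have hinv1 : t⁻¹ ≤ 1 := by
        rw [inv_le_one_iff₀]; right; linarith
      have h6 : t⁻¹ * ‖(T σ - s • u) + (S₁ σ - R σ)‖ ≤ ‖(T σ - s • u) + (S₁ σ - R σ)‖ :=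
        mul_le_of_le_one_left (norm_nonneg _) hinv1
      linarith
    calc ‖(m - q) • u - t⁻¹ • ((T σ - s • u) + (S₁ σ - R σ))‖
        ≤ ‖(m - q) • u‖ + ‖t⁻¹ • ((T σ - s • u) + (S₁ σ - R σ))‖ := norm_sub_le _ _
      _ < ε := by rw [hn1]; linarith
end

section
/- Let K be a compact Hausdorff space, X a real Banach space, and G a countably additive, regular X-valued Borel vector measure on K with semivariation ‖G‖(K) = 1. Let 0 < η < 1 and 0 < γ < 1. Assume f ∈ C(K) with ‖f‖ = 1 and x* ∈ X* with ‖x*‖ = 1 satisfy ∫_K f d(x*G) > 1 − η. Then |x*G|( K ∖ (A⁺_γ ∪ A⁻_γ) ) < 2η/γ + η, where A⁺_γ = {t ∈ K : f(t) ≥ 1 − γ} and A⁻_γ = {t ∈ K : f(t) ≤ −1 + γ}. -/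
open MeasureTheory

/-- The finite signed measure `E ↦ x*(G(E))` obtained from an `X`-valued vector measure `G`
and a continuous linear functional `x*`. -/
noncomputable def dualMeasure {K : Type*} [MeasurableSpace K] {X : Type*}
    [NormedAddCommGroup X] [NormedSpace ℝ X]
    (G : VectorMeasure K X) (xs : StrongDual ℝ X) : SignedMeasure K :=
  G.mapRange xs.toLinearMap.toAddMonoidHom xs.continuous

/-- The integral of a function against a signed measure, via the Jordan decomposition. -/
noncomputable def sintegral {K : Type*} [MeasurableSpace K]
    (s : SignedMeasure K) (f : K → ℝ) : ℝ :=
  (∫ t, f t ∂s.toJordanDecomposition.posPart) - ∫ t, f t ∂s.toJordanDecomposition.negPart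

/-- The semivariation `‖G‖(A) = sup {|x*G|(A) : ‖x*‖ ≤ 1}` of a vector measure. -/
noncomputable def semivariation {K : Type*} [MeasurableSpace K] {X : Type*}
    [NormedAddCommGroup X] [NormedSpace ℝ X]
    (G : VectorMeasure K X) (A : Set K) : ENNReal :=
  ⨆ xs ∈ Metric.closedBall (0 : StrongDual ℝ X) 1,
    (dualMeasure G xs).totalVariation A

/-- Regularity of a vector measure: every Borel set can be approximated from inside by
compact sets and from outside by open sets in semivariation. -/
def IsRegularVM {K : Type*} [TopologicalSpace K] [MeasurableSpace K] {X : Type*}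
    [NormedAddCommGroup X] [NormedSpace ℝ X] (G : VectorMeasure K X) : Prop :=
  ∀ E : Set K, MeasurableSet E → ∀ ε : ℝ, 0 < ε →
    ∃ F O : Set K, IsCompact F ∧ IsOpen O ∧ F ⊆ E ∧ E ⊆ O ∧
      semivariation G (O \ F) < ENNReal.ofReal ε

/-- **Lemma (first part).** If `G` is a countably additive, regular `X`-valued Borel
vector measure on a compact Hausdorff space `K` with semivariation `‖G‖(K) = 1`,
`0 < η, γ < 1`, `f ∈ C(K)` with `‖f‖ = 1` and `x*` with `‖x*‖ = 1` satisfy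
`∫_K f d(x*G) > 1 - η`, then `|x*G|(K ∖ (A⁺_γ ∪ A⁻_γ)) < 2η/γ + η`, where
`A⁺_γ = {t : f t ≥ 1 - γ}` and `A⁻_γ = {t : f t ≤ -1 + γ}`. -/
theorem totalVariation_compl_lt_of_integral_gt
    {K : Type*} [TopologicalSpace K] [CompactSpace K] [T2Space K]
    [MeasurableSpace K] [BorelSpace K]
    {X : Type*} [NormedAddCommGroup X] [NormedSpace ℝ X] [CompleteSpace X]
    (G : VectorMeasure K X) (hreg : IsRegularVM G)
    (hGnorm : semivariation G Set.univ = 1)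
    {η γ : ℝ} (hη0 : 0 < η) (hη1 : η < 1) (hγ0 : 0 < γ) (hγ1 : γ < 1)
    (f : C(K, ℝ)) (hf : ‖f‖ = 1)
    (xs : StrongDual ℝ X) (hxs : ‖xs‖ = 1)
    (hint : sintegral (dualMeasure G xs) (fun t => f t) > 1 - η) :
    (dualMeasure G xs).totalVariation
        (Set.univ \ ({t | 1 - γ ≤ f t} ∪ {t | f t ≤ -1 + γ})) <
      ENNReal.ofReal (2 * η / γ + η) := by
  set s := dualMeasure G xs with hs
  set ν₁ := s.toJordanDecomposition.posPart
  set ν₂ := s.toJordanDecomposition.negPart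
  set B : Set K := Set.univ \ ({t | 1 - γ ≤ f t} ∪ {t | f t ≤ -1 + γ}) with hBdef
  have hBmeas : MeasurableSet B := by
    apply MeasurableSet.diff MeasurableSet.univ
    exact ((isClosed_le continuous_const f.continuous).measurableSet).union
      ((isClosed_le f.continuous continuous_const).measurableSet)
  have hfb : ∀ t, |f t| ≤ 1 := by
    intro t; simpa [hf] using f.norm_coe_le_norm t
  have hfB : ∀ t ∈ B, |f t| ≤ 1 - γ := by
    intro t ht
    simp only [hBdef, Set.mem_diff, Set.mem_union, Set.mem_setOf_eq, not_or, not_le] at ht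
    rw [abs_le]; constructor <;> linarith [ht.2.1, ht.2.2]
  have key : ∀ (ν : Measure K), IsFiniteMeasure ν → ∀ (g : K → ℝ), Continuous g →
      (∀ t, |g t| ≤ 1) → (∀ t ∈ B, |g t| ≤ 1 - γ) →
      ∫ t, g t ∂ν ≤ (1 - γ) * (ν B).toReal + (ν Bᶜ).toReal := by
    intro ν hν g hg hg1 hgB
    have hgint : Integrable g ν :=
      integrableOn_univ.mp (hg.continuousOn.integrableOn_compact isCompact_univ)
    have h1 : ∫ t in B, g t ∂ν ≤ (1 - γ) * (ν B).toReal := by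
      refine le_trans (le_abs_self _) ?_
      calc |∫ t in B, g t ∂ν| = ‖∫ t in B, g t ∂ν‖ := rfl
        _ ≤ (1 - γ) * (ν B).toReal :=
          norm_setIntegral_le_of_norm_le_const (f := g) (C := 1 - γ) (measure_lt_top ν B)
            (fun x hx => by simpa [Real.norm_eq_abs] using hgB x hx)
    have h2 : ∫ t in Bᶜ, g t ∂ν ≤ (ν Bᶜ).toReal := by
      refine le_trans (le_abs_self _) ?_
      calc |∫ t in Bᶜ, g t ∂ν| = ‖∫ t in Bᶜ, g t ∂ν‖ := rfl
        _ ≤ 1 * (ν Bᶜ).toReal :=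
          norm_setIntegral_le_of_norm_le_const (f := g) (C := 1) (measure_lt_top ν Bᶜ)
            (fun x _ => by simpa [Real.norm_eq_abs] using hg1 x)
        _ = (ν Bᶜ).toReal := one_mul _
    calc ∫ t, g t ∂ν = ∫ t in B, g t ∂ν + ∫ t in Bᶜ, g t ∂ν :=
          (integral_add_compl hBmeas hgint).symm
      _ ≤ _ := add_le_add h1 h2
  have k1 := key ν₁ inferInstance (fun t => f t) f.continuous hfb hfB
  have k2 := key ν₂ inferInstance (fun t => -f t) f.continuous.neg
    (fun t => by simpa using hfb t) (fun t ht => by simpa using hfB t ht)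
  rw [integral_neg] at k2
  have htv : s.totalVariation = ν₁ + ν₂ := rfl
  have hμuniv : s.totalVariation Set.univ ≤ 1 := by
    rw [← hGnorm]
    exact le_iSup₂ (f := fun xs' (_ : xs' ∈ Metric.closedBall (0 : StrongDual ℝ X) 1) =>
      (dualMeasure G xs').totalVariation Set.univ) xs
      (by simp [Metric.mem_closedBall, hxs])
  haveI : IsFiniteMeasure s.totalVariation := by rw [htv]; infer_instance
  have hBtop : s.totalVariation B ≠ ⊤ := measure_ne_top _ _
  rw [ENNReal.lt_ofReal_iff_toReal_lt hBtop]
  have hsum : (s.totalVariation B).toReal + (s.totalVariation Bᶜ).toReal ≤ 1 := by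
    have hc := measure_add_measure_compl (μ := s.totalVariation) hBmeas
    have h1 : s.totalVariation B + s.totalVariation Bᶜ ≤ 1 := hc ▸ hμuniv
    have h2 := ENNReal.toReal_mono (by norm_num) h1
    rwa [ENNReal.toReal_add (measure_ne_top _ _) (measure_ne_top _ _), ENNReal.toReal_one] at h2
  have hBval : (s.totalVariation B).toReal = (ν₁ B).toReal + (ν₂ B).toReal := by
    rw [htv]
    simp [Measure.add_apply, ENNReal.toReal_add (measure_ne_top _ _) (measure_ne_top _ _)]
  have hBcval : (s.totalVariation Bᶜ).toReal = (ν₁ Bᶜ).toReal + (ν₂ Bᶜ).toReal := by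
    rw [htv]
    simp [Measure.add_apply, ENNReal.toReal_add (measure_ne_top _ _) (measure_ne_top _ _)]
  set b := (s.totalVariation B).toReal
  set c := (s.totalVariation Bᶜ).toReal
  have hb0 : 0 ≤ b := ENNReal.toReal_nonneg
  have hc0 : 0 ≤ c := ENNReal.toReal_nonneg
  have hintval : (∫ t, f t ∂ν₁) - (∫ t, f t ∂ν₂) > 1 - η := hint
  have hmain : 1 - η < (1 - γ) * b + c := by
    nlinarith [k1, k2, hBval, hBcval]
  have hγb : γ * b < η := by nlinarith
  show b < 2 * η / γ + η
  have h1 : b < η / γ := by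
    rw [lt_div_iff₀ hγ0]; linarith [hγb]
  have h2 : η / γ < 2 * η / γ + η := by
    have hpos : 0 < η / γ := div_pos hη0 hγ0
    have heq : 2 * η / γ = 2 * (η / γ) := by ring
    rw [heq]; linarith
  linarith
end

section
/- Let K be a compact Hausdorff space, X a real Banach space, and G a countably additive, regular X-valued Borel vector measure on K with semivariation ‖G‖(K) = 1. Let 0 < η < 1 and 0 < γ < 1. Assume f ∈ C(K) with ‖f‖ = 1 and x* ∈ X* with ‖x*‖ = 1 satisfy ∫_K f d(x*G) > 1 − η. Then there exist mutually disjoint compact sets F⁺, F⁻ ⊆ K such that the signed measure x*G is positive on F⁺ and negative on F⁻, and ∫_{(F⁺ ∩ A⁺_γ) ∪ (F⁻ ∩ A⁻_γ)} f d(x*G) > 1 − 4η/γ, where A⁺_γ = {t ∈ K : f(t) ≥ 1 − γ} and A⁻_γ = {t ∈ K : f(t) ≤ −1 + γ}. -/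
open MeasureTheory

lemma jordan_restrict {K : Type*} [MeasurableSpace K] (s : SignedMeasure K)
    {S : Set K} (hS : MeasurableSet S) :
    SignedMeasure.toJordanDecomposition (s.restrict S) =
      { posPart := s.toJordanDecomposition.posPart.restrict S
        negPart := s.toJordanDecomposition.negPart.restrict S
        posPart_finite := inferInstance
        negPart_finite := inferInstance
        mutuallySingular := s.toJordanDecomposition.mutuallySingular.mono
          (Measure.restrict_le_self) (Measure.restrict_le_self) } := by
  set J : JordanDecomposition K :=
    { posPart := s.toJordanDecomposition.posPart.restrict S
      negPart := s.toJordanDecomposition.negPart.restrict S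
      posPart_finite := inferInstance
      negPart_finite := inferInstance
      mutuallySingular := s.toJordanDecomposition.mutuallySingular.mono
        (Measure.restrict_le_self) (Measure.restrict_le_self) } with hJ
  have key : J.toSignedMeasure = s.restrict S := by
    ext E hE
    rw [JordanDecomposition.toSignedMeasure,
      Measure.toSignedMeasure_sub_apply hE,
      VectorMeasure.restrict_apply s hS hE]
    have := congrArg (fun v : SignedMeasure K => v (E ∩ S))
      s.toSignedMeasure_toJordanDecomposition
    rw [← this, JordanDecomposition.toSignedMeasure,
      Measure.toSignedMeasure_sub_apply (hE.inter hS)]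
    simp [hJ, Measure.real, Measure.restrict_apply hE]
  rw [← key, JordanDecomposition.toJordanDecomposition_toSignedMeasure]

lemma setInt_le {K : Type*} [MeasurableSpace K] {ν : Measure K} [IsFiniteMeasure ν]
    {g : K → ℝ} (hg : Integrable g ν) {S : Set K} (hS : MeasurableSet S) {c : ℝ}
    (hc : ∀ t ∈ S, g t ≤ c) :
    ∫ t in S, g t ∂ν ≤ c * (ν S).toReal := by
  calc ∫ t in S, g t ∂ν ≤ ∫ _ in S, c ∂ν :=
        setIntegral_mono_on hg.integrableOn (integrable_const c).integrableOn hS hc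
    _ = (ν S).toReal • c := by rw [setIntegral_const]; rfl
    _ = c * (ν S).toReal := by rw [smul_eq_mul, mul_comm]


set_option maxHeartbeats 1000000 in
/-- **Lemma (second part).** If `G` is a countably additive, regular `X`-valued Borel
vector measure on a compact Hausdorff space `K` with semivariation `‖G‖(K) = 1`,
`0 < η, γ < 1`, `f ∈ C(K)` with `‖f‖ = 1` and `x*` with `‖x*‖ = 1` satisfy
`∫_K f d(x*G) > 1 - η`, then there are disjoint compact sets `F⁺, F⁻` on which `x*G` is
respectively positive and negative, with
`∫_{(F⁺ ∩ A⁺_γ) ∪ (F⁻ ∩ A⁻_γ)} f d(x*G) > 1 - 4η/γ`. -/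
theorem exists_compact_posNeg_integral_gt
    {K : Type*} [TopologicalSpace K] [CompactSpace K] [T2Space K]
    [MeasurableSpace K] [BorelSpace K]
    {X : Type*} [NormedAddCommGroup X] [NormedSpace ℝ X] [CompleteSpace X]
    (G : VectorMeasure K X) (hreg : IsRegularVM G)
    (hGnorm : semivariation G Set.univ = 1)
    {η γ : ℝ} (hη0 : 0 < η) (hη1 : η < 1) (hγ0 : 0 < γ) (hγ1 : γ < 1)
    (f : C(K, ℝ)) (hf : ‖f‖ = 1)
    (xs : StrongDual ℝ X) (hxs : ‖xs‖ = 1)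
    (hint : sintegral (dualMeasure G xs) (fun t => f t) > 1 - η) :
    ∃ Fp Fm : Set K, IsCompact Fp ∧ IsCompact Fm ∧ Disjoint Fp Fm ∧
      (∀ E : Set K, MeasurableSet E → E ⊆ Fp → 0 ≤ dualMeasure G xs E) ∧
      (∀ E : Set K, MeasurableSet E → E ⊆ Fm → dualMeasure G xs E ≤ 0) ∧
      sintegral ((dualMeasure G xs).restrict
          ((Fp ∩ {t | 1 - γ ≤ f t}) ∪ (Fm ∩ {t | f t ≤ -1 + γ})))
        (fun t => f t) > 1 - 4 * η / γ := by
  classical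
  set μ := dualMeasure G xs with hμdef
  set μp := μ.toJordanDecomposition.posPart with hμpdef
  set μn := μ.toJordanDecomposition.negPart with hμndef
  obtain ⟨P, hP, hposP, hnegP, hpeq, hneq⟩ := μ.toJordanDecomposition_spec
  -- null facts for the Hahn set
  have hμpPc : μp Pᶜ = 0 := by
    rw [hμpdef, hpeq, SignedMeasure.toMeasureOfZeroLE_apply _ hposP hP hP.compl]
    simp [Set.inter_compl_self]
  have hμnP : μn P = 0 := by
    rw [hμndef, hneq, SignedMeasure.toMeasureOfLEZero_apply _ hnegP hP.compl hP]
    simp [Set.compl_inter_self]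
  -- total variation bounded by the semivariation
  have htv : ∀ A : Set K, μp A + μn A ≤ semivariation G A := by
    intro A
    have h1 : μ.totalVariation A ≤ semivariation G A := by
      refine le_biSup (fun y => (dualMeasure G y).totalVariation A) ?_
      rw [Metric.mem_closedBall, dist_zero_right, hxs]
    rwa [SignedMeasure.totalVariation, Measure.add_apply] at h1
  have hmass : (μp Set.univ).toReal + (μn Set.univ).toReal ≤ 1 := by
    have h1 := (htv Set.univ).trans (le_of_eq hGnorm)
    have h2 : ((μp Set.univ) + (μn Set.univ)).toReal ≤ (1 : ENNReal).toReal :=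
      ENNReal.toReal_mono ENNReal.one_ne_top h1
    rwa [ENNReal.toReal_add (measure_ne_top _ _) (measure_ne_top _ _),
      ENNReal.toReal_one] at h2
  -- the function
  have hgc : Continuous fun t => f t := f.continuous
  have hgb : ∀ t, |f t| ≤ 1 := by
    intro t
    have := f.norm_coe_le_norm t
    rwa [hf, Real.norm_eq_abs] at this
  have hcs : HasCompactSupport fun t => f t :=
    IsCompact.of_isClosed_subset isCompact_univ (isClosed_tsupport _) (Set.subset_univ _)
  have hgip : Integrable (fun t => f t) μp := hgc.integrable_of_hasCompactSupport hcs
  have hgin : Integrable (fun t => f t) μn := hgc.integrable_of_hasCompactSupport hcs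
  have hgipn : Integrable (fun t => -f t) μp := hgip.neg
  have hginn : Integrable (fun t => -f t) μn := hgin.neg
  -- the sets
  set Ap : Set K := {t | 1 - γ ≤ f t} with hApdef
  set Am : Set K := {t | f t ≤ -1 + γ} with hAmdef
  have hApm : MeasurableSet Ap := (isClosed_le continuous_const hgc).measurableSet
  have hAmm : MeasurableSet Am := (isClosed_le hgc continuous_const).measurableSet
  -- regularity
  have hεpos : 0 < η / γ := div_pos hη0 hγ0
  obtain ⟨Fp, Op, hFpc, hOpo, hFpP, hPOp, hsvp⟩ := hreg P hP (η / γ) hεpos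
  obtain ⟨Fm, Om, hFmc, hOmo, hFmP, hPOm, hsvm⟩ := hreg Pᶜ hP.compl (η / γ) hεpos
  have hFpm : MeasurableSet Fp := hFpc.isClosed.measurableSet
  have hFmm : MeasurableSet Fm := hFmc.isClosed.measurableSet
  have hdiffbound : ∀ (E A F : Set K), E ⊆ A → A ⊆ E → True := fun _ _ _ _ _ => trivial
  have hPFp : (μp (P \ Fp)).toReal + (μn (P \ Fp)).toReal < η / γ := by
    have h1 : μp (P \ Fp) + μn (P \ Fp) < ENNReal.ofReal (η / γ) := by
      refine lt_of_le_of_lt ?_ hsvp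
      refine le_trans ?_ (htv (Op \ Fp))
      gcongr <;> exact Set.diff_subset_diff_left hPOp
    have h2 := ENNReal.toReal_lt_of_lt_ofReal h1
    rwa [ENNReal.toReal_add (measure_ne_top _ _) (measure_ne_top _ _)] at h2
  have hPFm : (μp (Pᶜ \ Fm)).toReal + (μn (Pᶜ \ Fm)).toReal < η / γ := by
    have h1 : μp (Pᶜ \ Fm) + μn (Pᶜ \ Fm) < ENNReal.ofReal (η / γ) := by
      refine lt_of_le_of_lt ?_ hsvm
      refine le_trans ?_ (htv (Om \ Fm))
      gcongr <;> exact Set.diff_subset_diff_left hPOm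
    have h2 := ENNReal.toReal_lt_of_lt_ofReal h1
    rwa [ENNReal.toReal_add (measure_ne_top _ _) (measure_ne_top _ _)] at h2
  refine ⟨Fp, Fm, hFpc, hFmc, Disjoint.mono hFpP hFmP disjoint_compl_right, ?_, ?_, ?_⟩
  · intro E hE hEF
    have := (VectorMeasure.restrict_le_restrict_iff _ _ hP).mp hposP hE (hEF.trans hFpP)
    simpa using this
  · intro E hE hEF
    have := (VectorMeasure.restrict_le_restrict_iff _ _ hP.compl).mp hnegP hE (hEF.trans hFmP)
    simpa using this
  -- main estimate
  set B : Set K := (P ∩ Ap) ∪ (Pᶜ ∩ Am) with hBdef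
  set B' : Set K := (Fp ∩ Ap) ∪ (Fm ∩ Am) with hB'def
  have hBm : MeasurableSet B := (hP.inter hApm).union (hP.compl.inter hAmm)
  have hB'm : MeasurableSet B' := (hFpm.inter hApm).union (hFmm.inter hAmm)
  have hB'B : B' ⊆ B :=
    Set.union_subset_union (Set.inter_subset_inter_left _ hFpP)
      (Set.inter_subset_inter_left _ hFmP)
  have hBc : Bᶜ = (P ∩ Apᶜ) ∪ (Pᶜ ∩ Amᶜ) := by
    ext t
    simp only [hBdef, Set.mem_union, Set.mem_inter_iff, Set.mem_compl_iff]
    tauto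
  have hdisjPPc : Disjoint (P ∩ Apᶜ) (Pᶜ ∩ Amᶜ) :=
    Disjoint.mono Set.inter_subset_left Set.inter_subset_left disjoint_compl_right
  -- abbreviations for numbers
  set ap := (μp B).toReal
  set an := (μn B).toReal
  set bp := (μp Bᶜ).toReal
  set bn := (μn Bᶜ).toReal
  have hap0 : 0 ≤ ap := ENNReal.toReal_nonneg
  have han0 : 0 ≤ an := ENNReal.toReal_nonneg
  have hbp0 : 0 ≤ bp := ENNReal.toReal_nonneg
  have hbn0 : 0 ≤ bn := ENNReal.toReal_nonneg
  have hmassB : ap + bp + (an + bn) ≤ 1 := by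
    have h1 : ap + bp = (μp Set.univ).toReal := by
      rw [← ENNReal.toReal_add (measure_ne_top _ _) (measure_ne_top _ _),
        measure_add_measure_compl hBm]
    have h2 : an + bn = (μn Set.univ).toReal := by
      rw [← ENNReal.toReal_add (measure_ne_top _ _) (measure_ne_top _ _),
        measure_add_measure_compl hBm]
    rw [h1, h2]; exact hmass
  -- integral bounds over Bᶜ
  have hμpBc2 : μp (Pᶜ ∩ Amᶜ) = 0 :=
    measure_mono_null Set.inter_subset_left hμpPc
  have hμnBc1 : μn (P ∩ Apᶜ) = 0 :=
    measure_mono_null Set.inter_subset_left hμnP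
  have hIpBc : ∫ t in Bᶜ, f t ∂μp ≤ (1 - γ) * bp := by
    rw [hBc, setIntegral_union hdisjPPc (hP.compl.inter hAmm.compl)
      hgip.integrableOn hgip.integrableOn]
    have h0 : ∫ t in Pᶜ ∩ Amᶜ, f t ∂μp = 0 := by
      rw [Measure.restrict_eq_zero.mpr hμpBc2, integral_zero_measure]
    rw [h0, add_zero]
    have hb : ∫ t in P ∩ Apᶜ, f t ∂μp ≤ (1 - γ) * (μp (P ∩ Apᶜ)).toReal := by
      refine setInt_le hgip (hP.inter hApm.compl) ?_
      intro t ht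
      have : ¬(1 - γ ≤ f t) := ht.2
      linarith [le_of_not_ge this]
    refine hb.trans ?_
    have hsub : P ∩ Apᶜ ⊆ Bᶜ := by rw [hBc]; exact Set.subset_union_left
    have := ENNReal.toReal_mono (measure_ne_top μp Bᶜ) (measure_mono hsub)
    exact mul_le_mul_of_nonneg_left this (by linarith)
  have hInBc : ∫ t in Bᶜ, (-f t) ∂μn ≤ (1 - γ) * bn := by
    rw [hBc, setIntegral_union hdisjPPc (hP.compl.inter hAmm.compl)
      hginn.integrableOn hginn.integrableOn]
    have h0 : ∫ t in P ∩ Apᶜ, (-f t) ∂μn = 0 := by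
      rw [Measure.restrict_eq_zero.mpr hμnBc1, integral_zero_measure]
    rw [h0, zero_add]
    have hb : ∫ t in Pᶜ ∩ Amᶜ, (-f t) ∂μn ≤ (1 - γ) * (μn (Pᶜ ∩ Amᶜ)).toReal := by
      refine setInt_le hginn (hP.compl.inter hAmm.compl) ?_
      intro t ht
      have : ¬(f t ≤ -1 + γ) := ht.2
      linarith [le_of_not_ge this]
    refine hb.trans ?_
    have hsub : Pᶜ ∩ Amᶜ ⊆ Bᶜ := by rw [hBc]; exact Set.subset_union_right
    have := ENNReal.toReal_mono (measure_ne_top μn Bᶜ) (measure_mono hsub)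
    exact mul_le_mul_of_nonneg_left this (by linarith)
  -- integral bounds over B
  have hIpB : ∫ t in B, f t ∂μp ≤ ap := by
    have := setInt_le hgip hBm (c := 1) (fun t _ => (abs_le.mp (hgb t)).2)
    simpa using this
  have hInB : ∫ t in B, (-f t) ∂μn ≤ an := by
    have := setInt_le hginn hBm (c := 1)
      (fun t _ => by have := (abs_le.mp (hgb t)).1; linarith)
    simpa using this
  -- the total integral
  have hT : (∫ t, f t ∂μp) - (∫ t, f t ∂μn) > 1 - η := hint
  have hsplitp : (∫ t in B, f t ∂μp) + (∫ t in Bᶜ, f t ∂μp) = ∫ t, f t ∂μp :=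
    integral_add_compl hBm hgip
  have hsplitn : (∫ t in B, f t ∂μn) + (∫ t in Bᶜ, f t ∂μn) = ∫ t, f t ∂μn :=
    integral_add_compl hBm hgin
  have hnegint : ∀ S : Set K, ∫ t in S, (-f t) ∂μn = -∫ t in S, f t ∂μn := by
    intro S; exact integral_neg _
  have hnegintB := hnegint B
  have hnegintBc := hnegint Bᶜ
  -- deduce m < η/γ and I(B) > 1 - η/γ
  have hq : γ * (η / γ) = η := mul_div_cancel₀ η hγ0.ne'
  have h1γ : (0:ℝ) < 1 - γ := by linarith
  have hInBc' : -(∫ t in Bᶜ, f t ∂μn) ≤ (1 - γ) * bn := by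
    linarith [hInBc, hnegintBc]
  have hInB' : -(∫ t in B, f t ∂μn) ≤ an := by
    linarith [hInB, hnegintB]
  have hmlt : bp + bn < η / γ := by
    rw [lt_div_iff₀ hγ0]
    linarith [hT, hIpBc, hInBc', hIpB, hInB', hmassB, hsplitp, hsplitn]
  have hmul : (1 - γ) * (bp + bn) < (1 - γ) * (η / γ) :=
    mul_lt_mul_of_pos_left hmlt h1γ
  have hIB : (∫ t in B, f t ∂μp) - (∫ t in B, f t ∂μn) > 1 - η / γ := by
    have hexp : (1 - γ) * (η / γ) = η / γ - η := by
      have : γ * (η / γ) = η := hq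
      ring_nf
      ring_nf at this
      linarith [this]
    linarith [hT, hsplitp, hsplitn, hIpBc, hInBc', hmul, hexp]
  -- pass from B to B'
  have hdiffsub : B \ B' ⊆ (P \ Fp) ∪ (Pᶜ \ Fm) := by
    intro t ht
    obtain ⟨htB, htB'⟩ := ht
    rcases htB with h | h
    · left
      exact ⟨h.1, fun hFp => htB' (Or.inl ⟨hFp, h.2⟩)⟩
    · right
      exact ⟨h.1, fun hFm => htB' (Or.inr ⟨hFm, h.2⟩)⟩
  have hdp : (μp (B \ B')).toReal ≤ (μp (P \ Fp)).toReal + (μp (Pᶜ \ Fm)).toReal := by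
    have h1 : μp (B \ B') ≤ μp (P \ Fp) + μp (Pᶜ \ Fm) :=
      (measure_mono hdiffsub).trans (measure_union_le _ _)
    have h2 := ENNReal.toReal_mono
      (ENNReal.add_ne_top.mpr ⟨measure_ne_top _ _, measure_ne_top _ _⟩) h1
    rwa [ENNReal.toReal_add (measure_ne_top _ _) (measure_ne_top _ _)] at h2
  have hdn : (μn (B \ B')).toReal ≤ (μn (P \ Fp)).toReal + (μn (Pᶜ \ Fm)).toReal := by
    have h1 : μn (B \ B') ≤ μn (P \ Fp) + μn (Pᶜ \ Fm) :=
      (measure_mono hdiffsub).trans (measure_union_le _ _)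
    have h2 := ENNReal.toReal_mono
      (ENNReal.add_ne_top.mpr ⟨measure_ne_top _ _, measure_ne_top _ _⟩) h1
    rwa [ENNReal.toReal_add (measure_ne_top _ _) (measure_ne_top _ _)] at h2
  have hsplitp' : (∫ t in B', f t ∂μp) + (∫ t in B \ B', f t ∂μp) = ∫ t in B, f t ∂μp := by
    rw [← setIntegral_union disjoint_sdiff_self_right (hBm.diff hB'm)
      hgip.integrableOn hgip.integrableOn, Set.union_diff_cancel hB'B]
  have hsplitn' : (∫ t in B', f t ∂μn) + (∫ t in B \ B', f t ∂μn) = ∫ t in B, f t ∂μn := by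
    rw [← setIntegral_union disjoint_sdiff_self_right (hBm.diff hB'm)
      hgin.integrableOn hgin.integrableOn, Set.union_diff_cancel hB'B]
  have hIpD : ∫ t in B \ B', f t ∂μp ≤ (μp (B \ B')).toReal := by
    have := setInt_le hgip (hBm.diff hB'm) (c := 1) (fun t _ => (abs_le.mp (hgb t)).2)
    simpa using this
  have hInD : ∫ t in B \ B', (-f t) ∂μn ≤ (μn (B \ B')).toReal := by
    have := setInt_le hginn (hBm.diff hB'm) (c := 1)
      (fun t _ => by have := (abs_le.mp (hgb t)).1; linarith)
    simpa using this
  have hnegintD := hnegint (B \ B')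
  have hInD' : -(∫ t in B \ B', f t ∂μn) ≤ (μn (B \ B')).toReal := by
    linarith [hInD, hnegintD]
  have hIB' : (∫ t in B', f t ∂μp) - (∫ t in B', f t ∂μn) > 1 - 4 * η / γ := by
    have h4 : 4 * η / γ = 4 * (η / γ) := by ring
    rw [h4]
    linarith [hIB, hsplitp', hsplitn', hIpD, hInD', hdp, hdn, hPFp, hPFm, hεpos]
  -- rewrite sintegral of restriction
  have hjr := jordan_restrict μ hB'm
  show sintegral (μ.restrict B') (fun t => f t) > 1 - 4 * η / γ
  unfold sintegral
  rw [hjr]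
  exact hIB'
end

section
/- Let K be a compact Hausdorff space, X a real Banach space, and G a countably additive, regular X-valued Borel vector measure on K with finite semivariation ‖G‖(K) < ∞. Let x* ∈ X* and let η > 0. Then there exist mutually disjoint compact sets F⁺, F⁻ ⊆ K such that the signed measure x*G is positive on F⁺, negative on F⁻, and ‖G‖( K ∖ (F⁺ ∪ F⁻) ) < η. -/
open MeasureTheory

lemma semivariation_mono {K : Type*} [MeasurableSpace K] {X : Type*}
    [NormedAddCommGroup X] [NormedSpace ℝ X]
    (G : VectorMeasure K X) {A B : Set K} (h : A ⊆ B) :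
    semivariation G A ≤ semivariation G B :=
  iSup₂_mono fun _ _ => measure_mono h

lemma semivariation_union_le {K : Type*} [MeasurableSpace K] {X : Type*}
    [NormedAddCommGroup X] [NormedSpace ℝ X]
    (G : VectorMeasure K X) (A B : Set K) :
    semivariation G (A ∪ B) ≤ semivariation G A + semivariation G B := by
  refine iSup₂_le fun y hy => ?_
  calc (dualMeasure G y).totalVariation (A ∪ B)
      ≤ (dualMeasure G y).totalVariation A + (dualMeasure G y).totalVariation B :=
        measure_union_le _ _
    _ ≤ semivariation G A + semivariation G B :=
        add_le_add (le_iSup₂ (f := fun y _ => (dualMeasure G y).totalVariation A) y hy)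
          (le_iSup₂ (f := fun y _ => (dualMeasure G y).totalVariation B) y hy)

/-- For a countably additive, regular `X`-valued Borel vector measure `G` on a compact
Hausdorff space `K` with finite semivariation, any `x* ∈ X*` and any `η > 0`, there are
disjoint compact sets `F⁺, F⁻` such that `x*G` is positive on `F⁺`, negative on `F⁻`,
and `‖G‖(K ∖ (F⁺ ∪ F⁻)) < η`. -/
theorem exists_compact_hahn_semivariation_lt
    {K : Type*} [TopologicalSpace K] [CompactSpace K] [T2Space K]
    [MeasurableSpace K] [BorelSpace K]
    {X : Type*} [NormedAddCommGroup X] [NormedSpace ℝ X] [CompleteSpace X]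
    (G : VectorMeasure K X) (hreg : IsRegularVM G)
    (hfin : semivariation G Set.univ < ⊤)
    (xs : StrongDual ℝ X) {η : ℝ} (hη : 0 < η) :
    ∃ Fp Fm : Set K, IsCompact Fp ∧ IsCompact Fm ∧ Disjoint Fp Fm ∧
      (∀ E : Set K, MeasurableSet E → E ⊆ Fp → 0 ≤ dualMeasure G xs E) ∧
      (∀ E : Set K, MeasurableSet E → E ⊆ Fm → dualMeasure G xs E ≤ 0) ∧
      semivariation G (Set.univ \ (Fp ∪ Fm)) < ENNReal.ofReal η := by
  obtain ⟨P, hPm, hpos, hneg⟩ := (dualMeasure G xs).exists_compl_positive_negative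
  obtain ⟨Fp, O1, hFpc, _, hFpP, hPO1, hsv1⟩ := hreg P hPm (η/2) (by linarith)
  obtain ⟨Fm, O2, hFmc, _, hFmP, hPO2, hsv2⟩ := hreg Pᶜ hPm.compl (η/2) (by linarith)
  refine ⟨Fp, Fm, hFpc, hFmc, disjoint_compl_right.mono hFpP hFmP, ?_, ?_, ?_⟩
  · intro E hEm hE
    have := (VectorMeasure.restrict_le_restrict_iff _ _ hPm).mp hpos hEm (hE.trans hFpP)
    simpa using this
  · intro E hEm hE
    have := (VectorMeasure.restrict_le_restrict_iff _ _ hPm.compl).mp hneg hEm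
      (hE.trans hFmP)
    simpa using this
  · have hsub : Set.univ \ (Fp ∪ Fm) ⊆ (O1 \ Fp) ∪ (O2 \ Fm) := by
      intro x hx
      simp only [Set.mem_diff, Set.mem_union, not_or] at hx ⊢
      by_cases hxP : x ∈ P
      · exact Or.inl ⟨hPO1 hxP, hx.2.1⟩
      · exact Or.inr ⟨hPO2 hxP, hx.2.2⟩
    calc semivariation G (Set.univ \ (Fp ∪ Fm))
        ≤ semivariation G ((O1 \ Fp) ∪ (O2 \ Fm)) := semivariation_mono G hsub
      _ ≤ semivariation G (O1 \ Fp) + semivariation G (O2 \ Fm) :=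
          semivariation_union_le G _ _
      _ < ENNReal.ofReal (η/2) + ENNReal.ofReal (η/2) := ENNReal.add_lt_add hsv1 hsv2
      _ = ENNReal.ofReal η := by
          rw [← ENNReal.ofReal_add (by linarith) (by linarith)]; ring_nf
end

section
/- Let X and Y be real Banach spaces, let T : X → Y be a bounded linear operator with ‖T‖ = 1, let x₁ ∈ X with ‖x₁‖ = 1, let y* ∈ Y* with ‖y*‖ = 1, and let 0 < ε₂ < 1 be such that y*(T x₁) > 1 − ε₂². Define the bounded linear operator T̃ : X → Y by T̃ x = T x + ε₂ · y*(T x) · T x₁ for all x ∈ X. Then 1 − ε₂ < (1 − ε₂²)(1 + ε₂(1 − ε₂²)) ≤ ‖T̃ x₁‖ ≤ ‖T̃‖ ≤ 1 + ε₂. -/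
/-- Let `T : X → Y` with `‖T‖ = 1`, `‖x₁‖ = 1`, `‖y*‖ = 1` and `0 < ε₂ < 1` with
`y*(T x₁) > 1 - ε₂²`. If `T̃ x = T x + ε₂ y*(T x) • T x₁` for all `x`, then
`1 - ε₂ < (1 - ε₂²)(1 + ε₂(1 - ε₂²)) ≤ ‖T̃ x₁‖ ≤ ‖T̃‖ ≤ 1 + ε₂`. -/
theorem norm_perturbed_operator_bounds
    {X : Type*} [NormedAddCommGroup X] [NormedSpace ℝ X] [CompleteSpace X]
    {Y : Type*} [NormedAddCommGroup Y] [NormedSpace ℝ Y] [CompleteSpace Y]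
    (T : X →L[ℝ] Y) (hT : ‖T‖ = 1) (x₁ : X) (hx₁ : ‖x₁‖ = 1)
    (ys : StrongDual ℝ Y) (hys : ‖ys‖ = 1)
    {ε₂ : ℝ} (hε₂0 : 0 < ε₂) (hε₂1 : ε₂ < 1)
    (hy : ys (T x₁) > 1 - ε₂ ^ 2)
    (Ttilde : X →L[ℝ] Y)
    (hTt : ∀ x : X, Ttilde x = T x + (ε₂ * ys (T x)) • T x₁) :
    1 - ε₂ < (1 - ε₂ ^ 2) * (1 + ε₂ * (1 - ε₂ ^ 2)) ∧
    (1 - ε₂ ^ 2) * (1 + ε₂ * (1 - ε₂ ^ 2)) ≤ ‖Ttilde x₁‖ ∧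
    ‖Ttilde x₁‖ ≤ ‖Ttilde‖ ∧ ‖Ttilde‖ ≤ 1 + ε₂ := by
  set a := ys (T x₁) with ha
  have hTx₁ : ‖T x₁‖ ≤ 1 := by
    calc ‖T x₁‖ ≤ ‖T‖ * ‖x₁‖ := T.le_opNorm x₁
    _ = 1 := by rw [hT, hx₁]; ring
  have ha1 : a ≤ 1 := by
    calc a ≤ ‖ys (T x₁)‖ := le_abs_self _
    _ ≤ ‖ys‖ * ‖T x₁‖ := ys.le_opNorm _
    _ ≤ 1 := by rw [hys]; linarith
  have hbound : ‖Ttilde‖ ≤ 1 + ε₂ := by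
    apply ContinuousLinearMap.opNorm_le_bound _ (by linarith)
    intro x
    rw [hTt x]
    have h1 : ‖T x‖ ≤ ‖x‖ := by
      calc ‖T x‖ ≤ ‖T‖ * ‖x‖ := T.le_opNorm x
      _ = ‖x‖ := by rw [hT]; ring
    have h2 : ‖ys (T x)‖ ≤ ‖x‖ := by
      calc ‖ys (T x)‖ ≤ ‖ys‖ * ‖T x‖ := ys.le_opNorm _
      _ ≤ ‖x‖ := by rw [hys]; linarith
    calc ‖T x + (ε₂ * ys (T x)) • T x₁‖ ≤ ‖T x‖ + ‖(ε₂ * ys (T x)) • T x₁‖ :=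
          norm_add_le _ _
    _ = ‖T x‖ + ε₂ * ‖ys (T x)‖ * ‖T x₁‖ := by
          rw [norm_smul, norm_mul, Real.norm_eq_abs, abs_of_pos hε₂0]
    _ ≤ ‖x‖ + ε₂ * ‖x‖ * 1 := by
          have : ε₂ * ‖ys (T x)‖ * ‖T x₁‖ ≤ ε₂ * ‖x‖ * 1 :=
            mul_le_mul (mul_le_mul_of_nonneg_left h2 hε₂0.le) hTx₁ (norm_nonneg _)
              (by positivity)
          linarith
    _ = (1 + ε₂) * ‖x‖ := by ring
  have hlow : (1 - ε₂ ^ 2) * (1 + ε₂ * (1 - ε₂ ^ 2)) ≤ ‖Ttilde x₁‖ := by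
    have hval : ys (Ttilde x₁) = a + ε₂ * a ^ 2 := by
      rw [hTt x₁, map_add, map_smul]
      simp [← ha]; ring
    have h1 : a + ε₂ * a ^ 2 ≤ ‖Ttilde x₁‖ := by
      calc a + ε₂ * a ^ 2 = ys (Ttilde x₁) := hval.symm
      _ ≤ ‖ys (Ttilde x₁)‖ := le_abs_self _
      _ ≤ ‖ys‖ * ‖Ttilde x₁‖ := ys.le_opNorm _
      _ = ‖Ttilde x₁‖ := by rw [hys]; ring
    have hb : (0:ℝ) < 1 - ε₂ ^ 2 := by nlinarith
    have hab : (0:ℝ) < a + (1 - ε₂ ^ 2) := by nlinarith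
    nlinarith [mul_pos hε₂0 (mul_pos (sub_pos.2 hy) hab)]
  refine ⟨by nlinarith [sq_nonneg (1 - ε₂ ^ 2)], hlow, ?_, hbound⟩
  calc ‖Ttilde x₁‖ ≤ ‖Ttilde‖ * ‖x₁‖ := Ttilde.le_opNorm x₁
  _ = ‖Ttilde‖ := by rw [hx₁]; ring
end

section
/- Let K be a compact Hausdorff space, let X be a reflexive real Banach space, let G be a countably additive X-valued Borel vector measure on K with finite semivariation ‖G‖(K) < ∞, and let h : K → ℝ be a bounded Borel measurable function. Then there exists a unique bounded linear operator S : C(K) → X such that x*(Sf) = ∫_K f·h d(x*G) for every f ∈ C(K) and every x* ∈ X*, and ‖S‖ ≤ ‖G‖(K) · sup_{t ∈ K} |h(t)|. -/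
open MeasureTheory

section Helpers

variable {K : Type*} [MeasurableSpace K]

lemma bdd_integrable {g : K → ℝ} (hg : Measurable g) {C : ℝ} (hC : ∀ t, |g t| ≤ C)
    (μ : Measure K) [IsFiniteMeasure μ] : Integrable g μ :=
  Integrable.mono' (integrable_const C) hg.aestronglyMeasurable
    (Filter.Eventually.of_forall fun t => by simpa [Real.norm_eq_abs] using hC t)

lemma signedMeasure_apply' (s : SignedMeasure K) {E : Set K} (hE : MeasurableSet E) :
    s E = (s.toJordanDecomposition.posPart E).toReal
      - (s.toJordanDecomposition.negPart E).toReal := by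
  conv_lhs => rw [← s.toSignedMeasure_toJordanDecomposition]
  rw [JordanDecomposition.toSignedMeasure, VectorMeasure.sub_apply,
    Measure.toSignedMeasure_apply_measurable hE, Measure.toSignedMeasure_apply_measurable hE]
  rfl

lemma sintegral_eq_of_repr (s : SignedMeasure K) (μ ν : Measure K)
    [IsFiniteMeasure μ] [IsFiniteMeasure ν]
    (hrepr : ∀ E : Set K, MeasurableSet E → s E = (μ E).toReal - (ν E).toReal)
    {g : K → ℝ} (hg : Measurable g) {C : ℝ} (hC : ∀ t, |g t| ≤ C) :
    sintegral s g = (∫ t, g t ∂μ) - ∫ t, g t ∂ν := by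
  set p := s.toJordanDecomposition.posPart with hp
  set n := s.toJordanDecomposition.negPart with hn
  have hmeq : p + ν = μ + n := by
    ext E hE
    have h1 := signedMeasure_apply' s hE
    have h2 := hrepr E hE
    rw [← hp, ← hn] at h1
    have hfin : ((p + ν) E) ≠ ⊤ := measure_ne_top _ _
    have hfin2 : ((μ + n) E) ≠ ⊤ := measure_ne_top _ _
    rw [← ENNReal.toReal_eq_toReal_iff' hfin hfin2]
    rw [Measure.add_apply, Measure.add_apply,
      ENNReal.toReal_add (measure_ne_top _ _) (measure_ne_top _ _),
      ENNReal.toReal_add (measure_ne_top _ _) (measure_ne_top _ _)]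
    linarith
  have key : (∫ t, g t ∂p) + ∫ t, g t ∂ν = (∫ t, g t ∂μ) + ∫ t, g t ∂n := by
    rw [← integral_add_measure (bdd_integrable hg hC p) (bdd_integrable hg hC ν),
      ← integral_add_measure (bdd_integrable hg hC μ) (bdd_integrable hg hC n), hmeq]
  show (∫ t, g t ∂p) - ∫ t, g t ∂n = _
  linarith

lemma sintegral_zero_sm {g : K → ℝ} (hg : Measurable g) {C : ℝ} (hC : ∀ t, |g t| ≤ C) :
    sintegral (0 : SignedMeasure K) g = 0 := by
  rw [sintegral_eq_of_repr 0 0 0 (fun E hE => by simp) hg hC]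
  simp

lemma sintegral_add_sm (s t : SignedMeasure K) {g : K → ℝ} (hg : Measurable g)
    {C : ℝ} (hC : ∀ t, |g t| ≤ C) :
    sintegral (s + t) g = sintegral s g + sintegral t g := by
  rw [sintegral_eq_of_repr (s + t)
      (s.toJordanDecomposition.posPart + t.toJordanDecomposition.posPart)
      (s.toJordanDecomposition.negPart + t.toJordanDecomposition.negPart)
      (fun E hE => by
        rw [VectorMeasure.add_apply, signedMeasure_apply' s hE, signedMeasure_apply' t hE,
          Measure.add_apply, Measure.add_apply,
          ENNReal.toReal_add (measure_ne_top _ _) (measure_ne_top _ _),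
          ENNReal.toReal_add (measure_ne_top _ _) (measure_ne_top _ _)]
        ring) hg hC,
    integral_add_measure (bdd_integrable hg hC _) (bdd_integrable hg hC _),
    integral_add_measure (bdd_integrable hg hC _) (bdd_integrable hg hC _)]
  show _ = ((∫ t, g t ∂_) - _) + ((∫ t, g t ∂_) - _)
  ring

lemma smul_toReal_aux {c : ℝ} (hc : 0 ≤ c) (μ : Measure K) [IsFiniteMeasure μ]
    (E : Set K) : ((c.toNNReal • μ) E).toReal = c * (μ E).toReal := by
  rw [Measure.smul_apply, ENNReal.smul_def, smul_eq_mul, ENNReal.toReal_mul,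
    ENNReal.coe_toReal, Real.coe_toNNReal _ hc]

lemma integral_smul_aux {c : ℝ} (hc : 0 ≤ c) (μ : Measure K) (g : K → ℝ) :
    (∫ t, g t ∂(c.toNNReal • μ)) = c * ∫ t, g t ∂μ := by
  rw [integral_smul_nnreal_measure, NNReal.smul_def, Real.coe_toNNReal _ hc, smul_eq_mul]

lemma sintegral_smul_sm (c : ℝ) (s : SignedMeasure K) {g : K → ℝ} (hg : Measurable g)
    {C : ℝ} (hC : ∀ t, |g t| ≤ C) :
    sintegral (c • s) g = c * sintegral s g := by
  rcases le_or_gt 0 c with hc | hc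
  · rw [sintegral_eq_of_repr (c • s)
        (c.toNNReal • s.toJordanDecomposition.posPart)
        (c.toNNReal • s.toJordanDecomposition.negPart)
        (fun E hE => by
          rw [VectorMeasure.smul_apply, signedMeasure_apply' s hE,
            smul_toReal_aux hc, smul_toReal_aux hc, smul_eq_mul]
          ring) hg hC,
      integral_smul_aux hc, integral_smul_aux hc]
    show _ = c * ((∫ t, g t ∂_) - _)
    ring
  · have hc' : (0:ℝ) ≤ -c := by linarith
    rw [sintegral_eq_of_repr (c • s)
        ((-c).toNNReal • s.toJordanDecomposition.negPart)
        ((-c).toNNReal • s.toJordanDecomposition.posPart)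
        (fun E hE => by
          rw [VectorMeasure.smul_apply, signedMeasure_apply' s hE,
            smul_toReal_aux hc', smul_toReal_aux hc', smul_eq_mul]
          ring) hg hC,
      integral_smul_aux hc', integral_smul_aux hc']
    show _ = c * ((∫ t, g t ∂_) - _)
    ring

lemma abs_sintegral_le (s : SignedMeasure K) {g : K → ℝ} (hg : Measurable g)
    {C : ℝ} (hC : ∀ t, |g t| ≤ C) :
    |sintegral s g| ≤ C * (s.totalVariation Set.univ).toReal := by
  have h1 : ‖∫ t, g t ∂s.toJordanDecomposition.posPart‖
      ≤ C * (s.toJordanDecomposition.posPart Set.univ).toReal :=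
    norm_integral_le_of_norm_le_const
      (Filter.Eventually.of_forall fun t => by simpa [Real.norm_eq_abs] using hC t)
  have h2 : ‖∫ t, g t ∂s.toJordanDecomposition.negPart‖
      ≤ C * (s.toJordanDecomposition.negPart Set.univ).toReal :=
    norm_integral_le_of_norm_le_const
      (Filter.Eventually.of_forall fun t => by simpa [Real.norm_eq_abs] using hC t)
  rw [Real.norm_eq_abs] at h1 h2
  have htv : (s.totalVariation Set.univ).toReal
      = (s.toJordanDecomposition.posPart Set.univ).toReal
        + (s.toJordanDecomposition.negPart Set.univ).toReal := by
    rw [SignedMeasure.totalVariation, Measure.add_apply,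
      ENNReal.toReal_add (measure_ne_top _ _) (measure_ne_top _ _)]
  rw [htv]
  calc |sintegral s g| ≤ |∫ t, g t ∂s.toJordanDecomposition.posPart|
        + |∫ t, g t ∂s.toJordanDecomposition.negPart| := abs_sub _ _
    _ ≤ _ := by linarith
  
end Helpers

section Main

variable {K : Type*} [MeasurableSpace K] {X : Type*}
  [NormedAddCommGroup X] [NormedSpace ℝ X]

lemma dualMeasure_apply (G : VectorMeasure K X) (xs : StrongDual ℝ X) (E : Set K) :
    dualMeasure G xs E = xs (G E) := rfl

lemma dualMeasure_add (G : VectorMeasure K X) (xs ys : StrongDual ℝ X) :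
    dualMeasure G (xs + ys) = dualMeasure G xs + dualMeasure G ys := by
  refine VectorMeasure.ext fun E hE => ?_
  rw [VectorMeasure.add_apply, dualMeasure_apply, dualMeasure_apply, dualMeasure_apply,
    ContinuousLinearMap.add_apply]

lemma dualMeasure_smul (G : VectorMeasure K X) (c : ℝ) (xs : StrongDual ℝ X) :
    dualMeasure G (c • xs) = c • dualMeasure G xs := by
  refine VectorMeasure.ext fun E hE => ?_
  rw [VectorMeasure.smul_apply, dualMeasure_apply, dualMeasure_apply,
    ContinuousLinearMap.smul_apply, smul_eq_mul]

lemma dualMeasure_zero (G : VectorMeasure K X) : dualMeasure G 0 = 0 := by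
  refine VectorMeasure.ext fun E hE => ?_
  rw [dualMeasure_apply, ContinuousLinearMap.zero_apply, VectorMeasure.zero_apply]

lemma sintegral_add_fun (s : SignedMeasure K) {g₁ g₂ : K → ℝ}
    (h₁ : Measurable g₁) (h₂ : Measurable g₂)
    {C₁ C₂ : ℝ} (hb₁ : ∀ t, |g₁ t| ≤ C₁) (hb₂ : ∀ t, |g₂ t| ≤ C₂) :
    sintegral s (fun t => g₁ t + g₂ t) = sintegral s g₁ + sintegral s g₂ := by
  unfold sintegral
  rw [integral_add (bdd_integrable h₁ hb₁ _) (bdd_integrable h₂ hb₂ _),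
    integral_add (bdd_integrable h₁ hb₁ _) (bdd_integrable h₂ hb₂ _)]
  ring

lemma sintegral_smul_fun (s : SignedMeasure K) (c : ℝ) (g : K → ℝ) :
    sintegral s (fun t => c * g t) = c * sintegral s g := by
  unfold sintegral
  rw [integral_const_mul, integral_const_mul]
  ring

end Main


/-- Let `K` be a compact Hausdorff space, `X` a reflexive real Banach space, `G` a
countably additive `X`-valued Borel vector measure on `K` with finite semivariation, and
`h : K → ℝ` a bounded Borel measurable function. Then there is a unique bounded linear
operator `S : C(K) → X` with `x*(S f) = ∫_K f·h d(x*G)` for all `f` and `x*`, and it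
satisfies `‖S‖ ≤ ‖G‖(K) · sup_t |h t|`. -/
theorem exists_unique_operator_of_boundedDensity
    {K : Type*} [TopologicalSpace K] [CompactSpace K] [T2Space K]
    [MeasurableSpace K] [BorelSpace K]
    {X : Type*} [NormedAddCommGroup X] [NormedSpace ℝ X] [CompleteSpace X]
    (hrefl : Function.Surjective ⇑(NormedSpace.inclusionInDoubleDual ℝ X))
    (G : VectorMeasure K X) (hfin : semivariation G Set.univ < ⊤)
    (h : K → ℝ) (hmeas : Measurable h) (hbdd : ∃ C : ℝ, ∀ t : K, |h t| ≤ C) :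
    ∃ S : C(K, ℝ) →L[ℝ] X,
      (∀ (f : C(K, ℝ)) (xs : StrongDual ℝ X),
        xs (S f) = sintegral (dualMeasure G xs) (fun t => f t * h t)) ∧
      ‖S‖ ≤ (semivariation G Set.univ).toReal * ⨆ t : K, |h t| ∧
      ∀ S' : C(K, ℝ) →L[ℝ] X,
        (∀ (f : C(K, ℝ)) (xs : StrongDual ℝ X),
          xs (S' f) = sintegral (dualMeasure G xs) (fun t => f t * h t)) → S' = S := by
  classical
  obtain ⟨C₀, hC₀⟩ := hbdd
  set Ch : ℝ := ⨆ t : K, |h t| with hCh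
  have hbddA : BddAbove (Set.range fun t : K => |h t|) :=
    ⟨C₀, by rintro x ⟨t, rfl⟩; exact hC₀ t⟩
  have hhle : ∀ t : K, |h t| ≤ Ch := fun t => le_ciSup hbddA t
  have hCh0 : 0 ≤ Ch := by
    rcases isEmpty_or_nonempty K with hK | hK
    · rw [hCh, iSup_of_empty', Real.sSup_empty]
    · exact le_trans (abs_nonneg _) (hhle hK.some)
  set sv : ℝ := (semivariation G Set.univ).toReal with hsv
  have hsv0 : 0 ≤ sv := ENNReal.toReal_nonneg
  -- measurability and boundedness of the integrand
  have hgmeas : ∀ f : C(K, ℝ), Measurable fun t => f t * h t :=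
    fun f => (map_continuous f).measurable.mul hmeas
  have hgbdd : ∀ (f : C(K, ℝ)) (t : K), |f t * h t| ≤ ‖f‖ * Ch := fun f t => by
    rw [abs_mul]
    exact mul_le_mul (f.norm_coe_le_norm t) (hhle t) (abs_nonneg _) (norm_nonneg _)
  -- total variation bound on the unit ball
  have htv : ∀ xs : StrongDual ℝ X, ‖xs‖ ≤ 1 →
      ((dualMeasure G xs).totalVariation Set.univ).toReal ≤ sv := by
    intro xs hxs
    have hmem : xs ∈ Metric.closedBall (0 : StrongDual ℝ X) 1 := by
      simpa [Metric.mem_closedBall, dist_zero_right] using hxs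
    have hle : (dualMeasure G xs).totalVariation Set.univ ≤ semivariation G Set.univ :=
      le_biSup (fun ys => (dualMeasure G ys).totalVariation Set.univ) hmem
    exact ENNReal.toReal_mono hfin.ne hle
  -- the key estimate
  have hest : ∀ (f : C(K, ℝ)) (xs : StrongDual ℝ X),
      |sintegral (dualMeasure G xs) (fun t => f t * h t)| ≤ (sv * Ch * ‖f‖) * ‖xs‖ := by
    intro f xs
    rcases eq_or_ne xs 0 with rfl | hxs
    · rw [dualMeasure_zero, sintegral_zero_sm (hgmeas f) (hgbdd f)]
      simp
    · have hn : 0 < ‖xs‖ := norm_pos_iff.mpr hxs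
      set ys : StrongDual ℝ X := ‖xs‖⁻¹ • xs with hys
      have hys1 : ‖ys‖ ≤ 1 := by
        rw [hys, norm_smul, norm_inv, norm_norm, inv_mul_cancel₀ hn.ne']
      have hxseq : xs = ‖xs‖ • ys := by
        rw [hys, smul_smul, mul_inv_cancel₀ hn.ne', one_smul]
      calc |sintegral (dualMeasure G xs) (fun t => f t * h t)|
          = ‖xs‖ * |sintegral (dualMeasure G ys) (fun t => f t * h t)| := by
            conv_lhs => rw [hxseq, dualMeasure_smul,
              sintegral_smul_sm _ _ (hgmeas f) (hgbdd f)]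
            rw [abs_mul, abs_of_pos hn]
        _ ≤ ‖xs‖ * ((‖f‖ * Ch) * ((dualMeasure G ys).totalVariation Set.univ).toReal) :=
            mul_le_mul_of_nonneg_left (abs_sintegral_le _ (hgmeas f) (hgbdd f)) hn.le
        _ ≤ ‖xs‖ * ((‖f‖ * Ch) * sv) := by
            refine mul_le_mul_of_nonneg_left ?_ hn.le
            exact mul_le_mul_of_nonneg_left (htv ys hys1)
              (mul_nonneg (norm_nonneg _) hCh0)
        _ = (sv * Ch * ‖f‖) * ‖xs‖ := by ring
  -- the double-dual element associated with f
  let Φ : C(K, ℝ) → StrongDual ℝ (StrongDual ℝ X) := fun f =>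
    LinearMap.mkContinuous
      { toFun := fun xs => sintegral (dualMeasure G xs) (fun t => f t * h t)
        map_add' := fun xs ys => by
          show sintegral (dualMeasure G (xs + ys)) _ = _
          rw [dualMeasure_add, sintegral_add_sm _ _ (hgmeas f) (hgbdd f)]
        map_smul' := fun c xs => by
          show sintegral (dualMeasure G (c • xs)) _ = _
          rw [dualMeasure_smul, sintegral_smul_sm _ _ (hgmeas f) (hgbdd f)]
          rfl }
      (sv * Ch * ‖f‖)
      (fun xs => by simpa [Real.norm_eq_abs] using hest f xs)
  have hΦ : ∀ (f : C(K, ℝ)) (xs : StrongDual ℝ X),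
      Φ f xs = sintegral (dualMeasure G xs) (fun t => f t * h t) := fun f xs => rfl
  -- define S pointwise via reflexivity
  have hSm : ∀ f : C(K, ℝ), ∃ x : X, ∀ xs : StrongDual ℝ X,
      xs x = sintegral (dualMeasure G xs) (fun t => f t * h t) := by
    intro f
    obtain ⟨x, hx⟩ := hrefl (Φ f)
    exact ⟨x, fun xs => by rw [← hΦ f xs, ← hx]; rfl⟩
  choose Smap hSmap using hSm
  have hdual : ∀ {x y : X}, (∀ xs : StrongDual ℝ X, xs x = xs y) → x = y :=
    fun hxy => (NormedSpace.eq_iff_forall_dual_eq ℝ).mpr hxy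
  have hadd : ∀ f g : C(K, ℝ), Smap (f + g) = Smap f + Smap g := by
    intro f g
    refine hdual fun xs => ?_
    rw [hSmap, map_add, hSmap, hSmap]
    have : (fun t => (f + g) t * h t) = fun t => f t * h t + g t * h t := by
      funext t; simp [add_mul]
    rw [this, sintegral_add_fun _ (hgmeas f) (hgmeas g) (hgbdd f) (hgbdd g)]
  have hsmul : ∀ (c : ℝ) (f : C(K, ℝ)), Smap (c • f) = c • Smap f := by
    intro c f
    refine hdual fun xs => ?_
    rw [hSmap, _root_.map_smul, hSmap, smul_eq_mul]
    have : (fun t => (c • f) t * h t) = fun t => c * (f t * h t) := by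
      funext t; simp [mul_assoc]
    rw [this, sintegral_smul_fun]
  have hnorm : ∀ f : C(K, ℝ), ‖Smap f‖ ≤ (sv * Ch) * ‖f‖ := by
    intro f
    refine NormedSpace.norm_le_dual_bound ℝ _ ?_ fun xs => ?_
    · positivity
    · rw [hSmap, Real.norm_eq_abs]
      calc |sintegral (dualMeasure G xs) (fun t => f t * h t)|
          ≤ (sv * Ch * ‖f‖) * ‖xs‖ := hest f xs
        _ = (sv * Ch) * ‖f‖ * ‖xs‖ := by ring
  let S : C(K, ℝ) →L[ℝ] X :=
    LinearMap.mkContinuous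
      { toFun := Smap, map_add' := hadd, map_smul' := hsmul }
      (sv * Ch) (fun f => hnorm f)
  refine ⟨S, fun f xs => hSmap f xs, ?_, ?_⟩
  · exact LinearMap.mkContinuous_norm_le _ (by positivity) _
  · intro S' hS'
    refine ContinuousLinearMap.ext fun f => ?_
    refine hdual fun xs => ?_
    rw [hS' f xs]
    exact (hSmap f xs).symm
end
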